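/- For every T > 0, the function ν ↦ (2h²ν⁴/(c²kT²)) · exp(hν/(kT)) / (exp(hν/(kT)) − 1)² (which is the partial derivative of the Planck function with respect to T) is integrable on (0, ∞), and 4π ∫₀^∞ (2h²ν⁴/(c²kT²)) · exp(hν/(kT)) / (exp(hν/(kT)) − 1)² dν = 4 a_r c T³, where a_r = 8π⁵k⁴/(15 h³ c³). -/

import Mathlib

open MeasureTheory Real Set

noncomputable def Pf : ℝ → ℝ := fun x => x ^ 4 * Real.exp x / (Real.exp x - 1) ^ 2

noncomputable def Ff (n : ℕ) : ℝ → ℝ := fun x => n * (x ^ 4 * Real.exp (-(n * x)))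

lemma Ff_int (n : ℕ) (hn : 0 < n) : IntegrableOn (Ff n) (Ioi 0) := by
  have h1 : IntegrableOn (fun x : ℝ => (n:ℝ) * (x ^ (4:ℝ) * Real.exp (-(n:ℝ) * x ^ (1:ℝ))))
      (Ioi 0) := (integrableOn_rpow_mul_exp_neg_mul_rpow (p := 1) (s := 4) (b := n)
    (by norm_num) zero_lt_one (by exact_mod_cast hn)).const_mul (n : ℝ)
  refine h1.congr_fun (fun x hx => ?_) measurableSet_Ioi
  have hx0 : (0:ℝ) < x := hx
  rw [Ff]
  beta_reduce
  rw [Real.rpow_one, ← Real.rpow_natCast x 4]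
  norm_num

lemma Ff_integral (n : ℕ) (hn : 0 < n) :
    ∫ x in Ioi (0:ℝ), Ff n x = 24 * (1 / (n:ℝ) ^ 4) := by
  have key := Real.integral_rpow_mul_exp_neg_mul_Ioi (a := 5) (r := (n:ℝ))
    (by norm_num) (by exact_mod_cast hn)
  have h5 : Real.Gamma 5 = 24 := by
    rw [show (5:ℝ) = (4:ℕ)+1 by norm_num, Real.Gamma_nat_eq_factorial]
    norm_num [Nat.factorial]
  rw [h5] at key
  have heq : ∫ x in Ioi (0:ℝ), Ff n x
      = (n:ℝ) * ∫ t in Ioi (0:ℝ), t ^ ((5:ℝ) - 1) * Real.exp (-((n:ℝ) * t)) := by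
    rw [← integral_const_mul]
    refine setIntegral_congr_fun measurableSet_Ioi (fun x hx => ?_)
    have hx0 : (0:ℝ) < x := hx
    rw [Ff]
    norm_num
  have hn' : (0:ℝ) < n := by exact_mod_cast hn
  rw [heq, key, div_rpow zero_le_one hn'.le, Real.one_rpow,
    show (5:ℝ) = ((5:ℕ):ℝ) by norm_num, Real.rpow_natCast]
  field_simp

lemma Ff_hasSum {x : ℝ} (hx : 0 < x) : HasSum (fun n : ℕ => Ff n x) (Pf x) := by
  have hr : ‖Real.exp (-x)‖ < 1 := by
    rw [Real.norm_eq_abs, abs_of_pos (Real.exp_pos _)]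
    exact Real.exp_lt_one_iff.2 (neg_lt_zero.2 hx)
  have H := (hasSum_coe_mul_geometric_of_norm_lt_one hr).mul_left (x ^ 4)
  have hE : (1:ℝ) < Real.exp x := by nlinarith [Real.add_one_le_exp x]
  have hE0 : Real.exp x ≠ 0 := (Real.exp_pos x).ne'
  have hE1 : Real.exp x - 1 ≠ 0 := sub_ne_zero.2 hE.ne'
  convert H using 1
  · rfl
  · funext n
    rw [Ff, show -((n:ℝ) * x) = (n:ℝ) * (-x) by ring, Real.exp_nat_mul]
    ring
  · rw [Pf, Real.exp_neg]
    field_simp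

lemma Pf_integrable : IntegrableOn Pf (Ioi 0) := by
  have hcont : ContinuousOn Pf (Ioi 0) := by
    apply ContinuousOn.div
    · fun_prop
    · fun_prop
    · intro x hx
      have hx0 : (0:ℝ) < x := hx
      have : (1:ℝ) < Real.exp x := by nlinarith [Real.add_one_le_exp x]
      exact pow_ne_zero 2 (ne_of_gt (sub_pos.2 this))
  have hPfnn : ∀ x : ℝ, 0 ≤ Pf x := by
    intro x
    rw [Pf]
    positivity
  rw [← Ioc_union_Ioi_eq_Ioi (zero_le_one)]
  refine IntegrableOn.union ?_ ?_
  · refine Integrable.mono' (integrable_const (Real.exp 1))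
      ((hcont.mono Ioc_subset_Ioi_self).aestronglyMeasurable measurableSet_Ioc) ?_
    filter_upwards [ae_restrict_mem measurableSet_Ioc] with x hx
    rw [Real.norm_eq_abs, abs_of_nonneg (hPfnn x)]
    have hx0 : 0 < x := hx.1
    have h1 : x ≤ Real.exp x - 1 := by linarith [Real.add_one_le_exp x]
    have hx2 : (0:ℝ) < x ^ 2 := by positivity
    have hd : x ^ 2 ≤ (Real.exp x - 1) ^ 2 := by nlinarith
    calc Pf x ≤ x ^ 4 * Real.exp x / x ^ 2 := by
          rw [Pf]
          exact div_le_div_of_nonneg_left (by positivity) hx2 hd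
      _ = x ^ 2 * Real.exp x := by field_simp
      _ ≤ 1 * Real.exp 1 := by
          have h2 : Real.exp x ≤ Real.exp 1 := Real.exp_le_exp.2 hx.2
          have hx1 : x ≤ 1 := hx.2
          have h3 : x ^ 2 ≤ 1 := by nlinarith
          nlinarith [Real.exp_pos x]
      _ = Real.exp 1 := one_mul _
  · have hbd0 : IntegrableOn (fun x : ℝ => 4 * (x ^ (4:ℝ) * Real.exp (-1 * x ^ (1:ℝ))))
        (Ioi 0) := (integrableOn_rpow_mul_exp_neg_mul_rpow (p := 1) (s := 4) (b := 1)
      (by norm_num) zero_lt_one one_pos).const_mul 4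
    have hbd : IntegrableOn (fun x : ℝ => 4 * (x ^ (4:ℝ) * Real.exp (-1 * x ^ (1:ℝ))))
        (Ioi 1) := MeasureTheory.IntegrableOn.mono_set hbd0 (Ioi_subset_Ioi zero_le_one)
    refine Integrable.mono' hbd
      ((hcont.mono (Ioi_subset_Ioi zero_le_one)).aestronglyMeasurable measurableSet_Ioi) ?_
    filter_upwards [ae_restrict_mem measurableSet_Ioi] with x hx
    rw [Real.norm_eq_abs, abs_of_nonneg (hPfnn x)]
    have hx0 : (0:ℝ) < x := lt_trans one_pos hx
    have hE2 : (2:ℝ) ≤ Real.exp x := by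
      have h1 : (2:ℝ) ≤ Real.exp 1 := by
        have := Real.exp_one_gt_d9
        linarith
      exact h1.trans (Real.exp_le_exp.2 (le_of_lt hx))
    have hq : Real.exp x ^ 2 / 4 ≤ (Real.exp x - 1) ^ 2 := by nlinarith
    have hq0 : (0:ℝ) < Real.exp x ^ 2 / 4 := by positivity
    calc Pf x ≤ x ^ 4 * Real.exp x / (Real.exp x ^ 2 / 4) := by
          rw [Pf]
          exact div_le_div_of_nonneg_left (by positivity) hq0 hq
      _ = 4 * (x ^ (4:ℝ) * Real.exp (-1 * x ^ (1:ℝ))) := by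
          rw [Real.rpow_one, show (4:ℝ) = ((4:ℕ):ℝ) by norm_num, Real.rpow_natCast,
            neg_one_mul, Real.exp_neg]
          have hE0 : Real.exp x ≠ 0 := (Real.exp_pos x).ne'
          field_simp

lemma Pf_integral : ∫ x in Ioi (0:ℝ), Pf x = 4 * π ^ 4 / 15 := by
  have hFint : ∀ n : ℕ, Integrable (Ff n) (volume.restrict (Ioi 0)) := by
    intro n
    rcases Nat.eq_zero_or_pos n with rfl | hn
    · have hz : Ff 0 = fun _ => 0 := by funext x; simp [Ff]
      rw [hz]
      exact integrable_zero _ _ _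
    · exact Ff_int n hn
  have hnorm : ∀ n : ℕ, ∫ x in Ioi (0:ℝ), ‖Ff n x‖ = ∫ x in Ioi (0:ℝ), Ff n x := by
    intro n
    refine setIntegral_congr_fun measurableSet_Ioi (fun x hx => ?_)
    have hx0 : (0:ℝ) < x := hx
    rw [Real.norm_eq_abs, abs_of_nonneg]
    rw [Ff]
    positivity
  have hval : ∀ n : ℕ, ∫ x in Ioi (0:ℝ), Ff n x = 24 * (1 / (n:ℝ) ^ 4) := by
    intro n
    rcases Nat.eq_zero_or_pos n with rfl | hn
    · simp [Ff]
    · exact Ff_integral n hn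
  have hzeta := hasSum_zeta_four.mul_left (24:ℝ)
  have hsummable : Summable fun n : ℕ => ∫ x in Ioi (0:ℝ), ‖Ff n x‖ :=
    hzeta.summable.congr fun n => ((hnorm n).trans (hval n)).symm
  have hHS := hasSum_integral_of_summable_integral_norm hFint hsummable
  have hHS2 : HasSum (fun n : ℕ => ∫ x in Ioi (0:ℝ), Ff n x) (24 * (π ^ 4 / 90)) := by
    refine hzeta.congr_fun fun n => ?_
    rw [hval]
  have htsum : ∫ x in Ioi (0:ℝ), (∑' n : ℕ, Ff n x) = ∫ x in Ioi (0:ℝ), Pf x := by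
    refine setIntegral_congr_fun measurableSet_Ioi (fun x hx => ?_)
    exact (Ff_hasSum hx).tsum_eq
  have := hHS.unique hHS2
  rw [htsum] at this
  rw [this]
  ring

lemma planck_sub (a C : ℝ) (ha : 0 < a) :
    IntegrableOn (fun ν => C * Pf (a * ν)) (Ioi (0:ℝ)) ∧
    ∫ ν in Ioi (0:ℝ), C * Pf (a * ν) = C * a⁻¹ * (4 * π ^ 4 / 15) := by
  constructor
  · exact ((integrableOn_Ioi_comp_mul_left_iff Pf 0 ha).2
      (by simpa using Pf_integrable)).const_mul C
  · rw [integral_const_mul, integral_comp_mul_left_Ioi Pf 0 ha, mul_zero, smul_eq_mul,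
      Pf_integral]
    ring

theorem planck_derivative_integral (h k c : ℝ) (hh : 0 < h) (hk : 0 < k) (hc : 0 < c) :
    ∀ T : ℝ, 0 < T →
      IntegrableOn
        (fun ν => 2 * h ^ 2 * ν ^ 4 / (c ^ 2 * k * T ^ 2) *
          Real.exp (h * ν / (k * T)) / (Real.exp (h * ν / (k * T)) - 1) ^ 2)
        (Set.Ioi (0 : ℝ)) volume ∧
      4 * π * (∫ ν in Set.Ioi (0 : ℝ),
          2 * h ^ 2 * ν ^ 4 / (c ^ 2 * k * T ^ 2) *
            Real.exp (h * ν / (k * T)) / (Real.exp (h * ν / (k * T)) - 1) ^ 2)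
        = 4 * (8 * π ^ 5 * k ^ 4 / (15 * h ^ 3 * c ^ 3)) * c * T ^ 3 := by
  intro T hT
  have ha : 0 < h / (k * T) := by positivity
  obtain ⟨Hint, Hval⟩ := planck_sub (h / (k * T))
    (2 * h ^ 2 / (c ^ 2 * k * T ^ 2 * (h / (k * T)) ^ 4)) ha
  have hgfun : ∀ ν ∈ Ioi (0:ℝ),
      2 * h ^ 2 * ν ^ 4 / (c ^ 2 * k * T ^ 2) *
          Real.exp (h * ν / (k * T)) / (Real.exp (h * ν / (k * T)) - 1) ^ 2
        = 2 * h ^ 2 / (c ^ 2 * k * T ^ 2 * (h / (k * T)) ^ 4) * Pf (h / (k * T) * ν) := by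
    intro ν hν
    have hν0 : (0:ℝ) < ν := hν
    rw [Pf, show h / (k * T) * ν = h * ν / (k * T) by ring]
    have hkT : k * T ≠ 0 := by positivity
    have harg : 0 < h * ν / (k * T) := by positivity
    have hE : (1:ℝ) < Real.exp (h * ν / (k * T)) := by
      nlinarith [Real.add_one_le_exp (h * ν / (k * T))]
    have hne : Real.exp (h * ν / (k * T)) - 1 ≠ 0 := ne_of_gt (by linarith)
    field_simp
  constructor
  · exact Hint.congr_fun (fun ν hν => (hgfun ν hν).symm) measurableSet_Ioi
  · rw [setIntegral_congr_fun measurableSet_Ioi hgfun, Hval]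
    have hkT : k * T ≠ 0 := by positivity
    field_simp
    ring
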